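/- Let C = v0v1v2v3v4v5v6v7 be an 8-cycle where v0, v2, v4 have degree 2 and v1, v3, v5, v6, v7 have degree 3 (each with one neighbor outside the cycle). Suppose lists satisfy |L(v0)| ≥ 2, |L(v1)| ≥ 2, |L(v2)| ≥ 4, |L(v3)| ≥ 2, |L(v4)| ≥ 2 and the remaining cycle vertices v5, v6, v7 are already colored (counted among forbidden colors in the lists). If additionally all vertices among {v0,...,v4} pairwise within distance 2 must differ and v0, v4 each see all three colored vertices' relevant colors removed, then it is impossible that simultaneously L(v0) = L(v1) = {a,b}, L(v3) = L(v4) = {c,d}, L(v2) = {a,b,c,d}, and some color e ∉ {a,b,c,d} appears on v6; i.e., this configuration (configuration 1a1a1a0a0a) cannot occur in a minimal counterexample. -/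
import Mathlib


/-- Configuration `1a1a1a0a0a` is reducible (Lemma `first_reducible_cycles`,
case (a)). With 6 colors, on the 8-cycle `v0 … v7` with `v0, v2, v4` of degree
2, after coloring everything outside `S = {v0,…,v4}` we would have forced lists
`L(v0) = L(v1) = {a,b}`, `L(v3) = L(v4) = {c,d}`, `L(v2) = {a,b,c,d}` and some
color `e ∉ {a,b,c,d}` on `v6`.  Since `|L(v0)| = 2`, the four colored vertices
seen by `v0` (namely `v7`, `v6`, the outside neighbor of `v7`, and the outside
neighbor of `v1`, with colors `x7, e, xu7, xu1`) carry exactly the four colors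
of `{a,b}ᶜ`; symmetrically for `v4` (colors `x5, xu5, e, xu3` of `v5`, the
outside neighbor of `v5`, `v6`, and the outside neighbor of `v3`); and the two
colored vertices seen by `v2` (the outside neighbors of `v1` and `v3`, colors
`xu1, xu3`) carry exactly the two colors of `{a,b,c,d}ᶜ`.  This situation is
impossible. -/
theorem stmt18 (a b c d e x7 xu7 xu1 x5 xu5 xu3 : Fin 6)
    (hab : a ≠ b) (hcd : c ≠ d)
    (habcd : ({a, b, c, d} : Finset (Fin 6)).card = 4)
    (he : e ∉ ({a, b, c, d} : Finset (Fin 6)))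
    (hv0 : ({x7, e, xu7, xu1} : Finset (Fin 6)) = ({a, b} : Finset (Fin 6))ᶜ)
    (hv4 : ({x5, xu5, e, xu3} : Finset (Fin 6)) = ({c, d} : Finset (Fin 6))ᶜ)
    (hv2 : ({xu1, xu3} : Finset (Fin 6)) = ({a, b, c, d} : Finset (Fin 6))ᶜ) :
    False := by
  have hmem : e ∈ ({xu1, xu3} : Finset (Fin 6)) := by
    rw [hv2, Finset.mem_compl]; exact he
  have hcard0 : ({x7, e, xu7, xu1} : Finset (Fin 6)).card = 4 := by
    rw [hv0, Finset.card_compl]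
    simp [Finset.card_insert_of_notMem, hab]
  have hcard4 : ({x5, xu5, e, xu3} : Finset (Fin 6)).card = 4 := by
    rw [hv4, Finset.card_compl]
    simp [Finset.card_insert_of_notMem, hcd]
  rcases Finset.mem_insert.mp hmem with h1 | h3
  · subst h1
    have h : ({x7, e, xu7, e} : Finset (Fin 6)) = {x7, e, xu7} := by
      ext y; simp; try tauto
    rw [h] at hcard0
    have hle : ({x7, e, xu7} : Finset (Fin 6)).card ≤ 3 := by
      refine le_trans (Finset.card_insert_le _ _) (Nat.succ_le_succ ?_)
      refine le_trans (Finset.card_insert_le _ _) (Nat.succ_le_succ ?_)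
      simp
    omega
  · have h3 : e = xu3 := Finset.mem_singleton.mp h3
    subst h3
    have h : ({x5, xu5, e, e} : Finset (Fin 6)) = {x5, xu5, e} := by
      ext y; simp; try tauto
    rw [h] at hcard4
    have hle : ({x5, xu5, e} : Finset (Fin 6)).card ≤ 3 := by
      refine le_trans (Finset.card_insert_le _ _) (Nat.succ_le_succ ?_)
      refine le_trans (Finset.card_insert_le _ _) (Nat.succ_le_succ ?_)
      simp
    omega
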